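/- Let c ∈ ℂ and let ω be a real-valued function that is continuous on the closed disk {w ∈ ℂ : |w − c| ≤ 1} and twice continuously differentiable on the open disk D(c,1) = {w : |w − c| < 1}, satisfying the sinh-Gordon equation Δω = 2·sinh(2ω) on D(c,1). Then for every w ∈ D(c,1), |ω(w)| ≤ ln(2/(1 − |w − c|²)) + (1/2)·ln((2+√5)/4). In particular, |ω(c)| ≤ ln 2 + (1/2)·ln((2+√5)/4). -/

import Mathlib

open Filter Topology

noncomputable def laplacian (f : ℂ → ℝ) (z : ℂ) : ℝ :=
  fderiv ℝ (fun w => fderiv ℝ f w 1) z 1 +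
    fderiv ℝ (fun w => fderiv ℝ f w Complex.I) z Complex.I

lemma secondDeriv_nonpos_of_isLocalMax {g : ℝ → ℝ} {U : Set ℝ} (hU : IsOpen U) (h0 : (0:ℝ) ∈ U)
    (hg : ContDiffOn ℝ 2 g U) (hmax : IsLocalMax g 0) : deriv (deriv g) 0 ≤ 0 := by
  by_contra h
  push_neg at h
  have hcont : ContinuousOn (deriv (deriv g)) U := by
    have h1 : ContDiffOn ℝ 1 (deriv g) U := hg.deriv_of_isOpen hU (by norm_num)
    have h2 : ContDiffOn ℝ 0 (deriv (deriv g)) U := h1.deriv_of_isOpen hU (by norm_num)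
    exact h2.continuousOn
  have hca : ContinuousAt (deriv (deriv g)) 0 :=
    hcont.continuousAt (hU.mem_nhds h0)
  have hev : ∀ᶠ x in 𝓝 (0:ℝ), (x ∈ U ∧ 0 < deriv (deriv g) x) ∧ g x ≤ g 0 := by
    filter_upwards [hU.eventually_mem h0, hca.eventually (eventually_gt_nhds h), hmax] with x h1 h2 h3
    exact ⟨⟨h1, h2⟩, h3⟩
  rw [Metric.eventually_nhds_iff] at hev
  obtain ⟨δ, hδ, hball⟩ := hev
  set r := δ/2 with hr
  have hrpos : 0 < r := by positivity
  have hsub : Set.Icc (-r) r ⊆ Metric.ball (0:ℝ) δ := by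
    intro x hx
    simp only [Metric.mem_ball, Real.dist_eq, sub_zero]
    rw [abs_lt]; constructor <;> [linarith [hx.1]; linarith [hx.2]]
  have key : ∀ x ∈ Set.Icc (-r) r, (x ∈ U ∧ 0 < deriv (deriv g) x) ∧ g x ≤ g 0 := by
    intro x hx
    have := hsub hx
    simp only [Metric.mem_ball, Real.dist_eq, sub_zero] at this
    exact hball (by simpa [Real.dist_eq] using this)
  have scon : StrictConvexOn ℝ (Set.Icc (-r) r) g := by
    apply strictConvexOn_of_deriv2_pos (convex_Icc _ _)
    · exact hg.continuousOn.mono (fun x hx => (key x hx).1.1)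
    · intro x hx
      rw [interior_Icc] at hx
      have : (deriv^[2]) g x = deriv (deriv g) x := by
        simp [Function.iterate_succ, Function.iterate_one]
      rw [this]
      exact (key x (Set.mem_Icc_of_Ioo hx)).1.2
  have h1 : (-r) ∈ Set.Icc (-r) r := by constructor <;> linarith
  have h2 : r ∈ Set.Icc (-r) r := by constructor <;> linarith
  have hne : (-r) ≠ r := by linarith
  have := scon.2 h1 h2 hne (by norm_num : (0:ℝ) < 1/2) (by norm_num : (0:ℝ) < 1/2) (by norm_num)
  simp only [smul_eq_mul] at this
  have heq : (1/2 : ℝ) * (-r) + (1/2) * r = 0 := by ring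
  rw [heq] at this
  have ha := (key _ h1).2
  have hb := (key _ h2).2
  linarith

lemma secondDeriv_line {φ : ℂ → ℝ} {s : Set ℂ} (hs : IsOpen s) {w₀ : ℂ} (hw : w₀ ∈ s)
    (hφ : ContDiffOn ℝ 2 φ s) (v : ℂ) :
    deriv (deriv (fun t : ℝ => φ (w₀ + t • v))) 0 =
      fderiv ℝ (fun w => fderiv ℝ φ w v) w₀ v := by
  set line : ℝ → ℂ := fun t => w₀ + t • v with hline_def
  have hline : ∀ t : ℝ, HasDerivAt line v t := by
    intro t
    have : HasDerivAt (fun t : ℝ => t • v) ((1:ℝ) • v) t := (hasDerivAt_id t).smul_const v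
    simpa [hline_def] using this.const_add w₀
  have hlc : Continuous line := by continuity
  have hpre : IsOpen (line ⁻¹' s) := hs.preimage hlc
  have h0 : (0:ℝ) ∈ line ⁻¹' s := by simp [hline_def, hw]
  have hdiff : ∀ w ∈ s, DifferentiableAt ℝ φ w := fun w hw' =>
    (hφ.contDiffAt (hs.mem_nhds hw')).differentiableAt (by norm_num)
  have ev1 : deriv (fun t : ℝ => φ (line t)) =ᶠ[𝓝 0]
      fun t => fderiv ℝ φ (line t) v := by
    filter_upwards [hpre.mem_nhds h0] with t ht
    exact (((hdiff _ ht).hasFDerivAt).comp_hasDerivAt t (hline t)).deriv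
  have hFdiff : DifferentiableAt ℝ (fun w => fderiv ℝ φ w v) w₀ := by
    have h1 : DifferentiableAt ℝ (fderiv ℝ φ) w₀ :=
      ((hφ.contDiffAt (hs.mem_nhds hw)).fderiv_right (m := 1) (by norm_num)).differentiableAt
        (by norm_num)
    exact h1.clm_apply (differentiableAt_const v)
  have h2 : HasDerivAt (fun t => fderiv ℝ φ (line t) v)
      (fderiv ℝ (fun w => fderiv ℝ φ w v) w₀ v) 0 := by
    have hl0 : line 0 = w₀ := by simp [hline_def]
    have h3 : HasFDerivAt (fun w => fderiv ℝ φ w v)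
        (fderiv ℝ (fun w => fderiv ℝ φ w v) w₀) (line 0) := hl0 ▸ hFdiff.hasFDerivAt
    exact h3.comp_hasDerivAt 0 (hline 0)
  calc deriv (deriv (fun t : ℝ => φ (w₀ + t • v))) 0
      = deriv (fun t => fderiv ℝ φ (line t) v) 0 := ev1.deriv_eq
    _ = fderiv ℝ (fun w => fderiv ℝ φ w v) w₀ v := h2.deriv


lemma laplacian_nonpos_of_isLocalMax {φ : ℂ → ℝ} {s : Set ℂ} (hs : IsOpen s) {w₀ : ℂ}
    (hw : w₀ ∈ s) (hφ : ContDiffOn ℝ 2 φ s) (hmax : IsLocalMax φ w₀) :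
    laplacian φ w₀ ≤ 0 := by
  have key : ∀ v : ℂ, fderiv ℝ (fun w => fderiv ℝ φ w v) w₀ v ≤ 0 := by
    intro v
    rw [← secondDeriv_line hs hw hφ v]
    set line : ℝ → ℂ := fun t => w₀ + t • v with hline_def
    have hlc : Continuous line := by continuity
    have hl : ContDiff ℝ 2 line := by
      exact (contDiff_const.add (contDiff_id.smul contDiff_const) : ContDiff ℝ 2 line)
    apply secondDeriv_nonpos_of_isLocalMax (U := line ⁻¹' s) (hs.preimage hlc)
      (by simp [hline_def, hw])
    · exact ContDiffOn.comp hφ (hl.contDiffOn) (fun x hx => hx)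
    · have hl0 : line 0 = w₀ := by simp [hline_def]
      have ht : Filter.Tendsto line (𝓝 0) (𝓝 w₀) := by
        rw [← hl0]; exact hlc.continuousAt.tendsto
      have := ht.eventually hmax
      unfold IsLocalMax IsMaxFilter
      filter_upwards [this] with t h
      simpa [hl0, hline_def] using h
  have k1 := key 1
  have k2 := key Complex.I
  unfold laplacian
  linarith

lemma fderiv_apply_differentiableAt {φ : ℂ → ℝ} {s : Set ℂ} (hs : IsOpen s) {w : ℂ}
    (hw : w ∈ s) (hφ : ContDiffOn ℝ 2 φ s) (v : ℂ) :
    DifferentiableAt ℝ (fun x => fderiv ℝ φ x v) w := by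
  have h1 : DifferentiableAt ℝ (fderiv ℝ φ) w :=
    ((hφ.contDiffAt (hs.mem_nhds hw)).fderiv_right (m := 1) (by norm_num)).differentiableAt
      (by norm_num)
  exact h1.clm_apply (differentiableAt_const v)

lemma laplacian_neg (φ : ℂ → ℝ) (w : ℂ) :
    laplacian (fun x => -(φ x)) w = -(laplacian φ w) := by
  have h : ∀ v : ℂ, fderiv ℝ (fun x => fderiv ℝ (fun y => -(φ y)) x v) w v
      = -(fderiv ℝ (fun x => fderiv ℝ φ x v) w v) := by
    intro v
    have e1 : (fun x => fderiv ℝ (fun y => -(φ y)) x v) = fun x => -(fderiv ℝ φ x v) := by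
      funext x
      rw [show (fun y => -(φ y)) = fun y => -(φ y) from rfl, fderiv_fun_neg]
      simp
    rw [e1, fderiv_fun_neg]
    simp
  unfold laplacian
  rw [h 1, h Complex.I]
  ring

lemma laplacian_sub {f g : ℂ → ℝ} {s : Set ℂ} (hs : IsOpen s) {w : ℂ} (hw : w ∈ s)
    (hf : ContDiffOn ℝ 2 f s) (hg : ContDiffOn ℝ 2 g s) :
    laplacian (fun x => f x - g x) w = laplacian f w - laplacian g w := by
  have hdf : ∀ x ∈ s, DifferentiableAt ℝ f x := fun x hx =>
    (hf.contDiffAt (hs.mem_nhds hx)).differentiableAt (by norm_num)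
  have hdg : ∀ x ∈ s, DifferentiableAt ℝ g x := fun x hx =>
    (hg.contDiffAt (hs.mem_nhds hx)).differentiableAt (by norm_num)
  have h : ∀ v : ℂ, fderiv ℝ (fun x => fderiv ℝ (fun y => f y - g y) x v) w v
      = fderiv ℝ (fun x => fderiv ℝ f x v) w v - fderiv ℝ (fun x => fderiv ℝ g x v) w v := by
    intro v
    have hev : (fun x => fderiv ℝ (fun y => f y - g y) x v)
        =ᶠ[𝓝 w] (fun x => fderiv ℝ f x v - fderiv ℝ g x v) := by
      filter_upwards [hs.mem_nhds hw] with x hx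
      rw [fderiv_fun_sub (hdf x hx) (hdg x hx)]
      simp
    rw [hev.fderiv_eq, fderiv_fun_sub (fderiv_apply_differentiableAt hs hw hf v)
      (fderiv_apply_differentiableAt hs hw hg v)]
    simp
  unfold laplacian
  rw [h 1, h Complex.I]
  ring

noncomputable def uu (c : ℂ) (w : ℂ) : ℝ :=
  1 - (w.re - c.re) * (w.re - c.re) - (w.im - c.im) * (w.im - c.im)

noncomputable def VV (c : ℂ) (w : ℂ) : ℝ := Real.log 2 - Real.log (uu c w)

lemma uu_eq (c w : ℂ) : uu c w = 1 - ‖w - c‖ ^ 2 := by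
  rw [Complex.sq_norm, Complex.normSq_apply, uu]
  simp [Complex.sub_re, Complex.sub_im]
  ring

lemma uu_pos {c w : ℂ} (hw : ‖w - c‖ < 1) : 0 < uu c w := by
  rw [uu_eq]
  nlinarith [norm_nonneg (w - c)]

lemma uu_le_one (c w : ℂ) : uu c w ≤ 1 := by
  rw [uu_eq]
  nlinarith [norm_nonneg (w - c)]

lemma hasFDerivAt_re (w : ℂ) : HasFDerivAt (fun w : ℂ => w.re) Complex.reCLM w :=
  Complex.reCLM.hasFDerivAt

lemma hasFDerivAt_im (w : ℂ) : HasFDerivAt (fun w : ℂ => w.im) Complex.imCLM w :=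
  Complex.imCLM.hasFDerivAt

lemma hasFDerivAt_uu (c w : ℂ) :
    HasFDerivAt (uu c)
      ((0 : ℂ →L[ℝ] ℝ)
        - ((w.re - c.re) • Complex.reCLM + (w.re - c.re) • Complex.reCLM)
        - ((w.im - c.im) • Complex.imCLM + (w.im - c.im) • Complex.imCLM)) w := by
  have hre := (hasFDerivAt_re w).sub_const c.re
  have him := (hasFDerivAt_im w).sub_const c.im
  exact ((hasFDerivAt_const (1:ℝ) w).sub (hre.mul hre)).sub (him.mul him)

lemma contDiff_uu (c : ℂ) : ContDiff ℝ 2 (uu c) := by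
  have hre : ContDiff ℝ 2 (fun w : ℂ => w.re) := Complex.reCLM.contDiff
  have him : ContDiff ℝ 2 (fun w : ℂ => w.im) := Complex.imCLM.contDiff
  exact (contDiff_const.sub ((hre.sub contDiff_const).mul (hre.sub contDiff_const))).sub
    ((him.sub contDiff_const).mul (him.sub contDiff_const))

lemma contDiffOn_VV (c : ℂ) :
    ContDiffOn ℝ 2 (VV c) {w : ℂ | ‖w - c‖ < 1} := by
  apply ContDiffOn.sub contDiffOn_const
  exact ContDiffOn.log ((contDiff_uu c).contDiffOn) (fun x hx => (uu_pos hx).ne')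

lemma isOpen_disk (c : ℂ) : IsOpen {w : ℂ | ‖w - c‖ < 1} := by
  have h : {w : ℂ | ‖w - c‖ < 1} = Metric.ball c 1 := by
    ext w; simp [Metric.mem_ball, Complex.dist_eq]
  rw [h]; exact Metric.isOpen_ball

lemma fderiv_VV_apply {c x : ℂ} (hx : ‖x - c‖ < 1) (v : ℂ) :
    fderiv ℝ (VV c) x v
      = (2*(x.re - c.re)*v.re + 2*(x.im - c.im)*v.im) / uu c x := by
  have hV : HasFDerivAt (VV c)
      ((0 : ℂ →L[ℝ] ℝ) - (uu c x)⁻¹ •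
        ((0 : ℂ →L[ℝ] ℝ)
          - ((x.re - c.re) • Complex.reCLM + (x.re - c.re) • Complex.reCLM)
          - ((x.im - c.im) • Complex.imCLM + (x.im - c.im) • Complex.imCLM))) x :=
    (hasFDerivAt_const (Real.log 2) x).sub ((hasFDerivAt_uu c x).log (uu_pos hx).ne')
  rw [hV.fderiv]
  have hu := (uu_pos hx).ne'
  simp [ContinuousLinearMap.sub_apply, ContinuousLinearMap.add_apply,
    ContinuousLinearMap.smul_apply, Complex.reCLM_apply, Complex.imCLM_apply]
  field_simp
  ring

lemma laplacian_VV {c w : ℂ} (hw : ‖w - c‖ < 1) :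
    laplacian (VV c) w = 4 / (uu c w)^2 := by
  have hs := isOpen_disk c
  have hune := (uu_pos hw).ne'
  have key : ∀ v : ℂ, fderiv ℝ (fun x => fderiv ℝ (VV c) x v) w v
      = (2*(w.re-c.re)*v.re + 2*(w.im-c.im)*v.im)^2 / (uu c w)^2
        + (2*v.re^2 + 2*v.im^2) / uu c w := by
    intro v
    have hev : (fun x => fderiv ℝ (VV c) x v)
        =ᶠ[𝓝 w] (fun x => (2*(x.re - c.re)*v.re + 2*(x.im - c.im)*v.im) * (uu c x)⁻¹) := by
      filter_upwards [hs.mem_nhds hw] with x hx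
      rw [fderiv_VV_apply hx]
      field_simp
    rw [hev.fderiv_eq]
    have hnum : HasFDerivAt (fun x : ℂ => 2*(x.re - c.re)*v.re + 2*(x.im - c.im)*v.im)
        ((2*v.re) • Complex.reCLM + (2*v.im) • Complex.imCLM) w := by
      have h1 : HasFDerivAt (fun x : ℂ => 2*(x.re - c.re)*v.re)
          ((2*v.re) • Complex.reCLM) w := by
        have := ((hasFDerivAt_re w).sub_const c.re).const_mul 2
        have := this.mul_const v.re
        refine this.congr_fderiv ?_
        ext z
        simp [ContinuousLinearMap.smul_apply]
        ring
      have h2 : HasFDerivAt (fun x : ℂ => 2*(x.im - c.im)*v.im)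
          ((2*v.im) • Complex.imCLM) w := by
        have := ((hasFDerivAt_im w).sub_const c.im).const_mul 2
        have := this.mul_const v.im
        refine this.congr_fderiv ?_
        ext z
        simp [ContinuousLinearMap.smul_apply]
        ring
      exact h1.add h2
    have hinv : HasFDerivAt (fun x : ℂ => (uu c x)⁻¹)
        ((-(uu c w ^ 2)⁻¹) •
          ((0 : ℂ →L[ℝ] ℝ)
            - ((w.re - c.re) • Complex.reCLM + (w.re - c.re) • Complex.reCLM)
            - ((w.im - c.im) • Complex.imCLM + (w.im - c.im) • Complex.imCLM))) w :=
      (hasDerivAt_inv hune).comp_hasFDerivAt w (hasFDerivAt_uu c w)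
    have hG : HasFDerivAt (fun x : ℂ => (2*(x.re - c.re)*v.re + 2*(x.im - c.im)*v.im) * (uu c x)⁻¹) _ w :=
      hnum.mul hinv
    rw [hG.fderiv]
    simp [ContinuousLinearMap.sub_apply, ContinuousLinearMap.add_apply,
      ContinuousLinearMap.smul_apply, Complex.reCLM_apply, Complex.imCLM_apply]
    field_simp
    ring
  have k1 := key 1
  have k2 := key Complex.I
  simp [Complex.one_re, Complex.one_im, Complex.I_re, Complex.I_im] at k1 k2
  unfold laplacian
  rw [k1, k2]
  have huu : uu c w = 1 - (w.re-c.re)*(w.re-c.re) - (w.im-c.im)*(w.im-c.im) := rfl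
  rw [huu] at hune ⊢
  field_simp
  ring

lemma alg_bound {x A : ℝ} (hx : 0 < x) (hA : 4 ≤ A) (h : x - x⁻¹ ≤ A) :
    x / A ≤ (2 + Real.sqrt 5) / 4 := by
  have h5 : Real.sqrt 5 ^ 2 = 5 := Real.sq_sqrt (by norm_num)
  have h5' : 2 ≤ Real.sqrt 5 := by nlinarith [Real.sqrt_nonneg 5]
  have hA0 : 0 < A := by linarith
  have hx2 : x^2 ≤ A * x + 1 := by
    have h' := mul_le_mul_of_nonneg_right h hx.le
    rw [sub_mul, inv_mul_cancel₀ hx.ne'] at h'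
    nlinarith [h']
  rw [div_le_div_iff₀ hA0 (by norm_num : (0:ℝ) < 4)]
  by_contra hlt
  push_neg at hlt
  nlinarith [hx2, h5, h5', mul_pos hA0 hx, mul_lt_mul_of_pos_right hlt hx]

lemma VV_def (c w : ℂ) : VV c w = Real.log 2 - Real.log (uu c w) := rfl

lemma key_bound (c : ℂ) (ω : ℂ → ℝ)
    (hcont : ContinuousOn ω {w : ℂ | ‖w - c‖ ≤ 1})
    (hC2 : ContDiffOn ℝ 2 ω {w : ℂ | ‖w - c‖ < 1})
    (heq : ∀ w : ℂ, ‖w - c‖ < 1 →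
      laplacian ω w = 2 * Real.sinh (2 * ω w)) :
    ∀ w₁ : ℂ, ‖w₁ - c‖ < 1 →
      ω w₁ ≤ Real.log (2 / (1 - ‖w₁ - c‖ ^ 2)) +
        (1 / 2) * Real.log ((2 + Real.sqrt 5) / 4) := by
  intro w₁ hw₁
  have hs := isOpen_disk c
  have hsub : {w : ℂ | ‖w - c‖ < 1} ⊆ {w : ℂ | ‖w - c‖ ≤ 1} :=
    fun w hw => le_of_lt (Set.mem_setOf_eq ▸ hw)
  have hcomp : IsCompact {w : ℂ | ‖w - c‖ ≤ 1} := by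
    have h : {w : ℂ | ‖w - c‖ ≤ 1} = Metric.closedBall c 1 := by
      ext w; simp [Metric.mem_closedBall, Complex.dist_eq]
    rw [h]; exact isCompact_closedBall c 1
  obtain ⟨wM, hwM, hM'⟩ := hcomp.exists_isMaxOn ⟨c, by simp⟩ hcont
  have hM : ∀ w ∈ {w : ℂ | ‖w - c‖ ≤ 1}, ω w ≤ ω wM := hM'
  set M := ω wM with hMdef
  set η := fun w => ω w - VV c w with hηdef
  have hηC2 : ContDiffOn ℝ 2 η {w : ℂ | ‖w - c‖ < 1} :=
    hC2.sub (contDiffOn_VV c)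
  set t := M - η w₁ with htdef
  set ε := Real.exp (Real.log 2 - t) with hεdef
  have hε : 0 < ε := Real.exp_pos _
  have hεw₁ : ε ≤ uu c w₁ := by
    have hu1 : 0 < uu c w₁ := uu_pos hw₁
    have hb : ω w₁ ≤ M := hM w₁ (hsub hw₁)
    have h1 : Real.log 2 - t ≤ Real.log (uu c w₁) := by
      have h2 : η w₁ = ω w₁ - (Real.log 2 - Real.log (uu c w₁)) := by
        rw [hηdef]; simp [VV_def]
      rw [htdef, h2]; linarith
    calc ε = Real.exp (Real.log 2 - t) := rfl
      _ ≤ Real.exp (Real.log (uu c w₁)) := Real.exp_le_exp.mpr h1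
      _ = uu c w₁ := Real.exp_log hu1
  set K := {w : ℂ | ‖w - c‖ ≤ 1 ∧ ε/2 ≤ uu c w} with hKdef
  have hKs : K ⊆ {w : ℂ | ‖w - c‖ < 1} := by
    intro w hw
    have h2 : 0 < uu c w := lt_of_lt_of_le (by linarith) hw.2
    rw [uu_eq] at h2
    simp only [Set.mem_setOf_eq]
    nlinarith [norm_nonneg (w - c)]
  have hKcomp : IsCompact K := by
    have h : K = {w : ℂ | ‖w - c‖ ≤ 1} ∩ uu c ⁻¹' Set.Ici (ε/2) := by
      ext w; simp [hKdef, Set.mem_setOf_eq]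
    rw [h]
    exact hcomp.inter_right (isClosed_Ici.preimage (contDiff_uu c).continuous)
  have hw₁K : w₁ ∈ K := ⟨le_of_lt hw₁, by linarith⟩
  obtain ⟨w₀, hw₀K, hmax₀'⟩ := hKcomp.exists_isMaxOn ⟨w₁, hw₁K⟩
    (hηC2.continuousOn.mono hKs)
  have hmax₀ : ∀ w ∈ K, η w ≤ η w₀ := hmax₀'
  have hw₀s : ‖w₀ - c‖ < 1 := hKs hw₀K
  have hglobal : ∀ w, ‖w - c‖ < 1 → η w ≤ η w₀ := by
    intro w hw
    by_cases hK : w ∈ K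
    · exact hmax₀ w hK
    · have hu : ¬ (ε/2 ≤ uu c w) := fun h => hK ⟨le_of_lt hw, h⟩
      push_neg at hu
      have hupos := uu_pos hw
      have hlog : Real.log (uu c w) < Real.log ε :=
        Real.log_lt_log hupos (by linarith)
      have hηw : η w ≤ M - Real.log 2 + Real.log (uu c w) := by
        rw [hηdef]; simp only [VV_def]
        have := hM w (hsub hw)
        linarith
      have hlogε : Real.log ε = Real.log 2 - t := by rw [hεdef, Real.log_exp]
      have : η w < η w₁ := by
        rw [htdef] at hlogε
        calc η w ≤ M - Real.log 2 + Real.log (uu c w) := hηw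
          _ < M - Real.log 2 + Real.log ε := by linarith
          _ = η w₁ := by rw [hlogε]; ring
      exact le_of_lt (lt_of_lt_of_le this (hmax₀ w₁ hw₁K))
  have hlocmax : IsLocalMax η w₀ := by
    filter_upwards [hs.mem_nhds hw₀s] with w hw
    exact hglobal w hw
  have hlap : laplacian η w₀ ≤ 0 :=
    laplacian_nonpos_of_isLocalMax hs hw₀s hηC2 hlocmax
  have hlapeq : laplacian η w₀ = 2 * Real.sinh (2 * ω w₀) - 4 / (uu c w₀)^2 := by
    rw [hηdef, laplacian_sub hs hw₀s hC2 (contDiffOn_VV c), heq w₀ hw₀s, laplacian_VV hw₀s]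
  set x := Real.exp (2 * ω w₀) with hxdef
  set A := (4:ℝ) / (uu c w₀)^2 with hAdef
  have hu₀ : 0 < uu c w₀ := uu_pos hw₀s
  have hA4 : 4 ≤ A := by
    rw [hAdef, le_div_iff₀ (by positivity)]
    nlinarith [uu_le_one c w₀]
  have hxpos : 0 < x := Real.exp_pos _
  have hineq : x - x⁻¹ ≤ A := by
    have hsinh : 2 * Real.sinh (2 * ω w₀) = x - x⁻¹ := by
      rw [Real.sinh_eq, hxdef, ← Real.exp_neg]; ring
    rw [← hsinh]; linarith [hlap, hlapeq.symm.le, hlapeq]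
  have hxA : x / A ≤ (2 + Real.sqrt 5) / 4 := alg_bound hxpos hA4 hineq
  have hexpA : Real.exp (2 * VV c w₀) = A := by
    have h1 : Real.exp (VV c w₀) = 2 / uu c w₀ := by
      rw [VV_def, Real.exp_sub, Real.exp_log hu₀, Real.exp_log two_pos]
    rw [two_mul, Real.exp_add, h1, hAdef]
    field_simp; ring
  have hexpη : Real.exp (2 * η w₀) = x / A := by
    rw [hηdef]
    simp only
    rw [mul_sub, Real.exp_sub, hexpA, hxdef]
  have hη₀ : η w₀ ≤ (1/2) * Real.log ((2 + Real.sqrt 5) / 4) := by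
    have hQpos : (0:ℝ) < (2 + Real.sqrt 5) / 4 := by positivity
    have h1 : 2 * η w₀ ≤ Real.log ((2 + Real.sqrt 5) / 4) := by
      calc 2 * η w₀ = Real.log (Real.exp (2 * η w₀)) := (Real.log_exp _).symm
        _ ≤ Real.log ((2 + Real.sqrt 5) / 4) := by
            apply Real.log_le_log (by rw [hexpη]; positivity)
            rw [hexpη]; exact hxA
    linarith
  have hVw₁ : VV c w₁ = Real.log (2 / (1 - ‖w₁ - c‖ ^ 2)) := by
    rw [VV_def, uu_eq, Real.log_div two_ne_zero]
    · rw [← uu_eq]; exact (uu_pos hw₁).ne'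
  have hfin : η w₁ ≤ η w₀ := hmax₀ w₁ hw₁K
  have hw : ω w₁ = VV c w₁ + η w₁ := by rw [hηdef]; ring
  calc ω w₁ = VV c w₁ + η w₁ := hw
    _ ≤ VV c w₁ + 1/2 * Real.log ((2 + Real.sqrt 5)/4) :=
        add_le_add_right (le_trans hfin hη₀) _
    _ = Real.log (2 / (1 - ‖w₁ - c‖^2)) +
        (1/2) * Real.log ((2 + Real.sqrt 5)/4) := by rw [hVw₁]

theorem stmt1 (c : ℂ) (ω : ℂ → ℝ)
    (hcont : ContinuousOn ω {w : ℂ | ‖w - c‖ ≤ 1})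
    (hC2 : ContDiffOn ℝ 2 ω {w : ℂ | ‖w - c‖ < 1})
    (heq : ∀ w : ℂ, ‖w - c‖ < 1 →
      laplacian ω w = 2 * Real.sinh (2 * ω w)) :
    (∀ w : ℂ, ‖w - c‖ < 1 →
      |ω w| ≤ Real.log (2 / (1 - ‖w - c‖ ^ 2)) +
        (1 / 2) * Real.log ((2 + Real.sqrt 5) / 4)) ∧
      |ω c| ≤ Real.log 2 + (1 / 2) * Real.log ((2 + Real.sqrt 5) / 4) := by
  have h1 := key_bound c ω hcont hC2 heq
  have h2 := key_bound c (fun x => -(ω x)) hcont.neg hC2.neg (by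
    intro w hw
    rw [laplacian_neg, heq w hw]
    simp [Real.sinh_neg, mul_neg])
  have hmain : ∀ w : ℂ, ‖w - c‖ < 1 →
      |ω w| ≤ Real.log (2 / (1 - ‖w - c‖ ^ 2)) +
        (1 / 2) * Real.log ((2 + Real.sqrt 5) / 4) := by
    intro w hw
    have ha := h1 w hw
    have hb := h2 w hw
    rw [abs_le]
    exact ⟨by linarith, ha⟩
  refine ⟨hmain, ?_⟩
  have := hmain c (by simp)
  simpa using this
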